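/- arXiv:cs/0607024 — 2 statements merged into one kernel-verified Lean document; each statement's English description precedes it below -/
import Mathlib

section
/- Let C be a binary linear [n,k,d] code with k ≤ n/2 - 1. Then there exists a parity-check matrix of C with at most 2^(n·H((k+1)/n)) rows whose dead-end set enumerator equals the incorrigible set enumerator of C, where H is the binary entropy function. -/
set_option linter.unusedSectionVars false
set_option maxHeartbeats 1000000


open Finset

variable {ι : Type*}

/-- Support of a binary word. -/
def supp [Fintype ι] (x : ι → ZMod 2) : Finset ι :=
  Finset.univ.filter (fun j => x j ≠ 0)

/-- Hamming weight of a binary word. -/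
def wt [Fintype ι] (x : ι → ZMod 2) : ℕ := (supp x).card

/-- `S` is a stopping set for the matrix `H` if no row of the column-submatrix `H_S`
has weight exactly one. -/
def IsStoppingSet {ρ : Type*} (H : Matrix ρ ι (ZMod 2)) (S : Finset ι) : Prop :=
  ∀ i : ρ, (S.filter (fun j => H i j = 1)).card ≠ 1

/-- The dual code of a binary linear code. -/
def dualCode [Fintype ι] (C : Submodule (ZMod 2) (ι → ZMod 2)) :
    Submodule (ZMod 2) (ι → ZMod 2) where
  carrier := {y | ∀ x ∈ C, ∑ j, y j * x j = 0}
  add_mem' := by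
    intro a b ha hb x hx
    simp only [Set.mem_setOf_eq] at *
    simp [Pi.add_apply, add_mul, Finset.sum_add_distrib, ha x hx, hb x hx]
  zero_mem' := by intro x hx; simp
  smul_mem' := by
    intro c a ha x hx
    simp only [Set.mem_setOf_eq] at *
    simp [Pi.smul_apply, smul_eq_mul, mul_assoc, ← Finset.mul_sum, ha x hx]

/-- The complete parity-check matrix of `C`: rows indexed by all dual codewords. -/
def Hstar [Fintype ι] (C : Submodule (ZMod 2) (ι → ZMod 2)) :
    Matrix (dualCode C) ι (ZMod 2) := fun y j => (y : ι → ZMod 2) j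

/-- A code is minimum stopping if every stopping set of its complete parity-check
matrix is the support of a codeword. -/
def MinStopping [Fintype ι] (C : Submodule (ZMod 2) (ι → ZMod 2)) : Prop :=
  ∀ S : Finset ι, IsStoppingSet (Hstar C) S → ∃ c ∈ C, supp c = S

/-- `H` is a parity-check matrix for `C` : the words checked by all rows of `H`
are exactly the codewords of `C`. -/
def IsPCM {ρ : Type*} [Fintype ι] (C : Submodule (ZMod 2) (ι → ZMod 2))
    (H : Matrix ρ ι (ZMod 2)) : Prop :=
  ∀ x : ι → ZMod 2, x ∈ C ↔ ∀ i : ρ, ∑ j, H i j * x j = 0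

/-- The binary entropy function (base 2). -/
noncomputable def binEnt (x : ℝ) : ℝ := -x * Real.logb 2 x - (1 - x) * Real.logb 2 (1 - x)

section Alg
variable [Fintype ι] [DecidableEq ι]

lemma mem_dualCode {C : Submodule (ZMod 2) (ι → ZMod 2)} {y : ι → ZMod 2} :
    y ∈ dualCode C ↔ ∀ x ∈ C, ∑ j, y j * x j = 0 := Iff.rfl

noncomputable def dotB : (ι → ZMod 2) →ₗ[ZMod 2] (ι → ZMod 2) →ₗ[ZMod 2] ZMod 2 :=
  LinearMap.mk₂ (ZMod 2) (fun x y => ∑ j, x j * y j)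
    (fun x x' y => by simp [add_mul, Finset.sum_add_distrib])
    (fun c x y => by simp [Finset.mul_sum, mul_assoc])
    (fun x y y' => by simp [mul_add, Finset.sum_add_distrib])
    (fun c x y => by simp [Finset.mul_sum, mul_assoc, mul_left_comm])

@[simp] lemma dotB_apply (x y : ι → ZMod 2) : dotB x y = ∑ j, x j * y j := rfl

noncomputable def Phi (C : Submodule (ZMod 2) (ι → ZMod 2)) :
    (ι → ZMod 2) →ₗ[ZMod 2] Module.Dual (ZMod 2) C :=
  C.subtype.dualMap ∘ₗ dotB

lemma dualCode_eq_ker (C : Submodule (ZMod 2) (ι → ZMod 2)) :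
    dualCode C = LinearMap.ker (Phi C) := by
  ext y
  simp only [mem_dualCode, LinearMap.mem_ker, Phi, LinearMap.comp_apply]
  constructor
  · intro h
    ext c
    exact h c c.2
  · intro h x hx
    exact LinearMap.congr_fun h ⟨x, hx⟩

lemma dotB_injective : Function.Injective (dotB (ι := ι)) := by
  rw [← LinearMap.ker_eq_bot]
  ext x
  simp only [LinearMap.mem_ker, Submodule.mem_bot]
  constructor
  · intro h
    funext j
    have := LinearMap.congr_fun h (Pi.single j 1)
    simpa [Pi.single_apply, Finset.sum_ite_eq'] using this
  · rintro rfl; simp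

lemma phi_surjective (C : Submodule (ZMod 2) (ι → ZMod 2)) :
    Function.Surjective (Phi C) := by
  have h1 : Function.Surjective (dotB (ι := ι)) := by
    rw [← LinearMap.range_eq_top]
    apply Submodule.eq_top_of_finrank_eq
    rw [LinearMap.finrank_range_of_inj dotB_injective, Subspace.dual_finrank_eq]
  exact (LinearMap.dualMap_surjective_of_injective C.injective_subtype).comp h1

lemma finrank_dualCode (C : Submodule (ZMod 2) (ι → ZMod 2)) :
    Module.finrank (ZMod 2) (dualCode C) + Module.finrank (ZMod 2) C = Fintype.card ι := by
  have h := LinearMap.finrank_range_add_finrank_ker (Phi C)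
  rw [LinearMap.range_eq_top.mpr (phi_surjective C), ← dualCode_eq_ker,
    finrank_top, Subspace.dual_finrank_eq, Module.finrank_pi] at h
  omega

lemma le_dualCode_dualCode (C : Submodule (ZMod 2) (ι → ZMod 2)) :
    C ≤ dualCode (dualCode C) := by
  intro x hx y hy
  rw [Finset.sum_congr rfl (fun j _ => mul_comm (x j) (y j))]
  exact hy x hx

lemma dualCode_dualCode (C : Submodule (ZMod 2) (ι → ZMod 2)) :
    dualCode (dualCode C) = C := by
  refine (Submodule.eq_of_le_of_finrank_le (le_dualCode_dualCode C) ?_).symm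
  have h1 := finrank_dualCode C
  have h2 := finrank_dualCode (dualCode C)
  omega

/-- If `k < |A|` where `k = dim C`, there is a nonzero dual codeword supported in `A`. -/
lemma exists_dual_supported {C : Submodule (ZMod 2) (ι → ZMod 2)} {A : Finset ι}
    (hA : Module.finrank (ZMod 2) C < A.card) :
    ∃ u ∈ dualCode C, u ≠ 0 ∧ supp u ⊆ A := by
  classical
  -- the extension-by-zero map
  let g : ((↥A) → ZMod 2) →ₗ[ZMod 2] (ι → ZMod 2) :=
    { toFun := fun v j => if h : j ∈ A then v ⟨j, h⟩ else 0
      map_add' := by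
        intro v w
        funext j
        by_cases h : j ∈ A <;> simp [h]
      map_smul' := by
        intro c v
        funext j
        by_cases h : j ∈ A <;> simp [h] }
  have hginj : Function.Injective g := by
    rw [← LinearMap.ker_eq_bot]
    ext v
    simp only [LinearMap.mem_ker, Submodule.mem_bot]
    constructor
    · intro h
      funext a
      have := congrFun h a.1
      simpa [g, a.2] using this
    · rintro rfl
      funext j
      by_cases h : j ∈ A <;> simp [g, h]
  have hni : ¬ Function.Injective (Phi C ∘ₗ g) := by
    intro hinj
    have := LinearMap.finrank_le_finrank_of_injective hinj
    rw [Module.finrank_pi, Subspace.dual_finrank_eq] at this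
    simp only [Fintype.card_coe] at this
    omega
  rw [← LinearMap.ker_eq_bot] at hni
  obtain ⟨v, hv, hv0⟩ := Submodule.exists_mem_ne_zero_of_ne_bot hni
  refine ⟨g v, ?_, fun h => hv0 (hginj (by simpa using h)), ?_⟩
  · rw [dualCode_eq_ker]
    exact hv
  · intro j hj
    simp only [supp, Finset.mem_filter] at hj
    by_contra hA'
    exact hj.2 (by simp [g, hA'])

/-- If no nonzero codeword is supported inside `T`, then for any `t ∈ T` there is a dual
codeword equal to the indicator of `t` on `T`. -/
lemma exists_dual_single {C : Submodule (ZMod 2) (ι → ZMod 2)} {T : Finset ι} {t : ι}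
    (ht : t ∈ T) (hnc : ∀ c ∈ C, c ≠ 0 → ¬ supp c ⊆ T) :
    ∃ y ∈ dualCode C, y t = 1 ∧ ∀ j ∈ T, j ≠ t → y j = 0 := by
  classical
  let ρ : (dualCode C) →ₗ[ZMod 2] ((↥T) → ZMod 2) :=
    { toFun := fun y a => (y : ι → ZMod 2) a.1
      map_add' := by intros; rfl
      map_smul' := by intros; rfl }
  let U : Submodule (ZMod 2) ((↥T) → ZMod 2) := LinearMap.range ρ
  have hU : U = ⊤ := by
    by_contra hne
    have hlt : Module.finrank (ZMod 2) U < (Finset.univ : Finset ↥T).card := by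
      rw [Finset.card_univ]
      have := Submodule.finrank_lt_finrank_of_lt (lt_top_iff_ne_top.mpr hne)
      rwa [finrank_top, Module.finrank_pi] at this
    obtain ⟨w, hwU, hw0, -⟩ := exists_dual_supported hlt
    -- extend w by zero
    set x : ι → ZMod 2 := fun j => if h : j ∈ T then w ⟨j, h⟩ else 0 with hx
    have hxdd : x ∈ dualCode (dualCode C) := by
      intro y hy
      have : ∑ j, x j * y j = ∑ a : ↥T, w a * y a.1 := by
        rw [← (Finset.sum_subset T.subset_univ (fun j _ hj => by simp [hx, hj]) :
          ∑ j ∈ T, x j * y j = ∑ j, x j * y j),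
          ← Finset.sum_attach T (fun j => x j * y j), Finset.attach_eq_univ]
        refine Finset.sum_congr rfl fun a _ => ?_
        simp [hx, a.2]
      rw [this]
      exact hwU (ρ ⟨y, hy⟩) ⟨⟨y, hy⟩, rfl⟩
    rw [dualCode_dualCode] at hxdd
    have hx0 : x ≠ 0 := by
      intro h
      apply hw0
      funext a
      have := congrFun h a.1
      simpa [hx, a.2] using this
    refine hnc x hxdd hx0 ?_
    intro j hj
    simp only [supp, Finset.mem_filter] at hj
    by_contra hT
    exact hj.2 (by simp [hx, hT])
  -- now extract the preimage of the indicator of t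
  have : (Pi.single (⟨t, ht⟩ : ↥T) (1 : ZMod 2)) ∈ U := hU ▸ Submodule.mem_top
  obtain ⟨⟨y, hy⟩, hρ⟩ := this
  refine ⟨y, hy, ?_, ?_⟩
  · have := congrFun hρ ⟨t, ht⟩
    simpa [ρ] using this
  · intro j hj hjt
    have := congrFun hρ ⟨j, hj⟩
    simpa [ρ, Pi.single_apply, Subtype.ext_iff, hjt] using this

lemma mem_supp {x : ι → ZMod 2} {j : ι} : j ∈ supp x ↔ x j ≠ 0 := by simp [supp]

lemma zmod2_eq_one {a : ZMod 2} (h : a ≠ 0) : a = 1 := by revert a h; decide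

lemma zmod2_add_self (a : ZMod 2) : a + a = 0 := by revert a; decide

lemma supp_nonempty {x : ι → ZMod 2} (h : x ≠ 0) : (supp x).Nonempty := by
  by_contra hc
  rw [Finset.not_nonempty_iff_eq_empty] at hc
  apply h
  funext j
  by_contra hj
  have : j ∈ supp x := mem_supp.mpr hj
  simp [hc] at this

lemma supp_add_of_subset {u y : ι → ZMod 2} (h : supp u ⊆ supp y) :
    supp (y + u) = supp y \ supp u := by
  ext j
  simp only [mem_supp, Finset.mem_sdiff, Pi.add_apply]
  by_cases hu : u j = 0
  · simp [hu, mem_supp]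
  · have hu1 : u j = 1 := zmod2_eq_one hu
    have hy1 : y j = 1 := zmod2_eq_one (mem_supp.mp (h (mem_supp.mpr hu)))
    rw [hu1, hy1]
    decide

lemma exists_low_wt_dual_single {C : Submodule (ZMod 2) (ι → ZMod 2)} {T : Finset ι} {t : ι}
    (ht : t ∈ T) (hnc : ∀ c ∈ C, c ≠ 0 → ¬ supp c ⊆ T) :
    ∃ y ∈ dualCode C, wt y ≤ Module.finrank (ZMod 2) C + 1 ∧ y t = 1 ∧
      ∀ j ∈ T, j ≠ t → y j = 0 := by
  classical
  set k := Module.finrank (ZMod 2) C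
  set p : ℕ → Prop := fun w =>
    ∃ y, y ∈ dualCode C ∧ wt y = w ∧ y t = 1 ∧ ∀ j ∈ T, j ≠ t → y j = 0 with hp
  have hex : ∃ w, p w := by
    obtain ⟨y, hy, h1, h2⟩ := exists_dual_single ht hnc
    exact ⟨wt y, y, hy, rfl, h1, h2⟩
  obtain ⟨y, hy, hwy, hyt, hyT⟩ := Nat.find_spec hex
  by_cases hle : Nat.find hex ≤ k + 1
  · exact ⟨y, hy, hwy ▸ hle, hyt, hyT⟩
  exfalso
  push_neg at hle
  have htsupp : t ∈ supp y := mem_supp.mpr (by rw [hyt]; exact one_ne_zero)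
  set A : Finset ι := supp y \ {t} with hA
  have hAcard : k < A.card := by
    rw [hA, Finset.card_sdiff_of_subset (Finset.singleton_subset_iff.mpr htsupp)]
    have hcard : #(supp y) = Nat.find hex := hwy
    simp only [Finset.card_singleton]
    omega
  obtain ⟨u, hu, hu0, huA⟩ := exists_dual_supported hAcard
  have huy : supp u ⊆ supp y := huA.trans (Finset.sdiff_subset)
  have hut : u t = 0 := by
    by_contra h
    have := huA (mem_supp.mpr h)
    simp [hA] at this
  have h1 : (y + u) t = 1 := by simp [hyt, hut]
  have h2 : ∀ j ∈ T, j ≠ t → (y + u) j = 0 := by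
    intro j hj hjt
    have hyj := hyT j hj hjt
    have huj : u j = 0 := by
      by_contra h
      have := huA (mem_supp.mpr h)
      rw [hA, Finset.mem_sdiff, mem_supp] at this
      exact this.1 hyj
    simp [hyj, huj]
  have hwlt : wt (y + u) < Nat.find hex := by
    have hsub := supp_add_of_subset huy
    have : wt (y + u) = wt y - wt u := by
      rw [wt, hsub, Finset.card_sdiff_of_subset huy]; rfl
    have h1le : 1 ≤ wt u := Finset.card_pos.mpr (supp_nonempty hu0)
    have hle2 : wt u ≤ wt y := Finset.card_le_card huy
    omega
  exact Nat.find_min hex hwlt ⟨y + u, (dualCode C).add_mem hy hu, rfl, h1, h2⟩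

lemma orth_all_dual_of_orth_low {C : Submodule (ZMod 2) (ι → ZMod 2)} {x : ι → ZMod 2}
    (hx : ∀ w ∈ dualCode C, wt w ≤ Module.finrank (ZMod 2) C + 1 → ∑ j, w j * x j = 0) :
    ∀ y ∈ dualCode C, ∑ j, y j * x j = 0 := by
  classical
  set k := Module.finrank (ZMod 2) C
  intro y hy
  generalize hn : wt y = w
  induction w using Nat.strong_induction_on generalizing y with
  | _ w ih =>
  subst hn
  by_cases hle : wt y ≤ k + 1
  · exact hx y hy hle
  push_neg at hle
  have hne : (supp y).Nonempty := by
    rw [← Finset.card_pos]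
    change 0 < wt y
    omega
  obtain ⟨t, htsupp⟩ := hne
  set A : Finset ι := supp y \ {t} with hA
  have hAcard : k < A.card := by
    rw [hA, Finset.card_sdiff_of_subset (Finset.singleton_subset_iff.mpr htsupp)]
    have : wt y = #(supp y) := rfl
    simp only [Finset.card_singleton]
    omega
  obtain ⟨u, hu, hu0, huA⟩ := exists_dual_supported hAcard
  have huy : supp u ⊆ supp y := huA.trans Finset.sdiff_subset
  have hwu : wt u < wt y := by
    have h1 : wt u ≤ A.card := Finset.card_le_card huA
    have h2 : A.card < #(supp y) := by
      rw [hA, Finset.card_sdiff_of_subset (Finset.singleton_subset_iff.mpr htsupp)]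
      have : 0 < #(supp y) := Finset.card_pos.mpr ⟨t, htsupp⟩
      simp only [Finset.card_singleton]
      omega
    exact lt_of_le_of_lt h1 h2
  have hwyu : wt (y + u) < wt y := by
    have he : wt (y + u) = #(supp y) - #(supp u) := by
      rw [wt, supp_add_of_subset huy, Finset.card_sdiff_of_subset huy]
    have h1le : 1 ≤ #(supp u) := Finset.card_pos.mpr (supp_nonempty hu0)
    have hle2 : #(supp u) ≤ #(supp y) := Finset.card_le_card huy
    have hyy : wt y = #(supp y) := rfl
    omega
  have e1 := ih _ hwyu (y + u) ((dualCode C).add_mem hy hu) rfl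
  have e2 := ih _ hwu u hu rfl
  have key : ∑ j, y j * x j = (∑ j, (y + u) j * x j) + ∑ j, u j * x j := by
    rw [← Finset.sum_add_distrib]
    refine Finset.sum_congr rfl fun j _ => ?_
    rw [Pi.add_apply, add_mul, add_assoc, ← add_mul, zmod2_add_self, zero_mul, add_zero]
  rw [key, e1, e2, add_zero]

lemma card_filter_ne_one_of_dual {C : Submodule (ZMod 2) (ι → ZMod 2)} {c : ι → ZMod 2}
    (hc : c ∈ C) {y : ι → ZMod 2} (hy : y ∈ dualCode C) :
    ((supp c).filter (fun j => y j = 1)).card ≠ 1 := by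
  classical
  have h0 : ∑ j, y j * c j = 0 := hy c hc
  have hset : (Finset.univ : Finset ι).filter (fun j => y j * c j ≠ 0)
      = (supp c).filter (fun j => y j = 1) := by
    ext j
    simp only [Finset.mem_filter, Finset.mem_univ, true_and, supp]
    constructor
    · intro h
      have h1 : y j ≠ 0 := fun hz => h (by simp [hz])
      have h2 : c j ≠ 0 := fun hz => h (by simp [hz])
      exact ⟨h2, zmod2_eq_one h1⟩
    · rintro ⟨h2, h1⟩
      rw [h1, one_mul]
      exact h2
  have hsum : ∑ j, y j * c j =
      (((supp c).filter (fun j => y j = 1)).card : ZMod 2) := by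
    rw [← Finset.sum_filter_ne_zero, hset]
    have hone : ∀ j ∈ (supp c).filter (fun j => y j = 1), y j * c j = 1 := by
      intro j hj
      simp only [Finset.mem_filter, supp, Finset.mem_univ, true_and] at hj
      rw [hj.2, one_mul, zmod2_eq_one hj.1]
    rw [Finset.sum_congr rfl hone, Finset.sum_const, nsmul_eq_mul, mul_one]
  intro hcard
  rw [hsum, hcard] at h0
  exact one_ne_zero h0

lemma supp_injective : Function.Injective (supp (ι := ι)) := by
  intro x y h
  funext j
  by_cases hx : x j = 0
  · have hj : j ∉ supp y := by
      rw [← h]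
      exact fun hj => (mem_supp.mp hj) hx
    have hy0 : y j = 0 := by
      by_contra h'
      exact hj (mem_supp.mpr h')
    rw [hx, hy0]
  · have hj : j ∈ supp y := h ▸ mem_supp.mpr hx
    rw [zmod2_eq_one hx, zmod2_eq_one (mem_supp.mp hj)]

lemma card_le_sum_choose (F : Finset (ι → ZMod 2)) (m : ℕ) (hF : ∀ y ∈ F, wt y ≤ m) :
    F.card ≤ ∑ i ∈ Finset.range (m + 1), (Fintype.card ι).choose i := by
  classical
  rw [← Finset.card_image_of_injective F supp_injective]
  calc (F.image supp).card
      ≤ ((Finset.range (m + 1)).biUnion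
          (fun i => Finset.powersetCard i (Finset.univ : Finset ι))).card := by
        apply Finset.card_le_card
        intro s hs
        obtain ⟨y, hy, rfl⟩ := Finset.mem_image.mp hs
        apply Finset.mem_biUnion.mpr
        exact ⟨(supp y).card, Finset.mem_range.mpr (Nat.lt_succ_of_le (hF y hy)),
          Finset.mem_powersetCard_univ.mpr rfl⟩
    _ ≤ ∑ i ∈ Finset.range (m + 1), (Finset.powersetCard i (Finset.univ : Finset ι)).card :=
        Finset.card_biUnion_le
    _ = ∑ i ∈ Finset.range (m + 1), (Fintype.card ι).choose i := by
        refine Finset.sum_congr rfl fun i _ => ?_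
        rw [Finset.card_powersetCard, Finset.card_univ]

end Alg


lemma sum_choose_le_rpow (n m : ℕ) (hm : 1 ≤ m) (h2 : (m : ℝ) ≤ (n : ℝ) / 2) :
    (∑ i ∈ Finset.range (m + 1), (n.choose i : ℝ)) ≤
      (2 : ℝ) ^ ((n : ℝ) * binEnt ((m : ℝ) / (n : ℝ))) := by
  have hm1 : (1 : ℝ) ≤ (m : ℝ) := by exact_mod_cast hm
  have hn0 : (0 : ℝ) < n := by linarith
  set lam : ℝ := (m : ℝ) / n with hlam
  have hl0 : 0 < lam := div_pos (by linarith) hn0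
  have hl2 : lam ≤ 1 / 2 := by
    rw [hlam, div_le_div_iff₀ hn0 (by norm_num)]
    linarith
  set mu : ℝ := 1 - lam with hmu
  have hlmu : lam ≤ mu := by rw [hmu]; linarith
  have hmu0 : 0 < mu := lt_of_lt_of_le hl0 hlmu
  have hmn : m ≤ n := by
    have : (m : ℝ) ≤ (n : ℝ) := by linarith
    exact_mod_cast this
  have hterm : ∀ i, i ≤ m → lam ^ m * mu ^ (n - m) ≤ lam ^ i * mu ^ (n - i) := by
    intro i hi
    have e1 : lam ^ m = lam ^ i * lam ^ (m - i) := by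
      rw [← pow_add]
      congr 1
      omega
    have e2 : mu ^ (n - i) = mu ^ (m - i) * mu ^ (n - m) := by
      rw [← pow_add]
      congr 1
      omega
    rw [e1, e2]
    have h3 : lam ^ (m - i) ≤ mu ^ (m - i) := pow_le_pow_left₀ hl0.le hlmu _
    calc lam ^ i * lam ^ (m - i) * mu ^ (n - m)
        ≤ lam ^ i * (mu ^ (m - i) * mu ^ (n - m)) := by
          rw [mul_assoc]
          refine mul_le_mul_of_nonneg_left ?_ (pow_nonneg hl0.le _)
          exact mul_le_mul_of_nonneg_right h3 (pow_nonneg hmu0.le _)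
      _ = lam ^ i * (mu ^ (m - i) * mu ^ (n - m)) := rfl
  have key : (∑ i ∈ Finset.range (m + 1), (n.choose i : ℝ)) * (lam ^ m * mu ^ (n - m)) ≤ 1 := by
    rw [Finset.sum_mul]
    calc ∑ i ∈ Finset.range (m + 1), (n.choose i : ℝ) * (lam ^ m * mu ^ (n - m))
        ≤ ∑ i ∈ Finset.range (m + 1), (n.choose i : ℝ) * (lam ^ i * mu ^ (n - i)) := by
          refine Finset.sum_le_sum fun i hi => ?_
          refine mul_le_mul_of_nonneg_left ?_ (by positivity)
          exact hterm i (Nat.lt_succ_iff.mp (Finset.mem_range.mp hi))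
      _ ≤ ∑ i ∈ Finset.range (n + 1), (n.choose i : ℝ) * (lam ^ i * mu ^ (n - i)) := by
          refine Finset.sum_le_sum_of_subset_of_nonneg
            (Finset.range_subset_range.mpr (by omega)) fun i _ _ => by positivity
      _ = (lam + mu) ^ n := by
          rw [add_pow]
          refine Finset.sum_congr rfl fun i _ => ?_
          ring
      _ = 1 := by rw [hmu]; norm_num
  have hpos : (0 : ℝ) < lam ^ m * mu ^ (n - m) := by positivity
  have hineq : (∑ i ∈ Finset.range (m + 1), (n.choose i : ℝ)) ≤ (lam ^ m * mu ^ (n - m))⁻¹ := by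
    rw [← one_div]
    rw [le_div_iff₀ hpos]
    exact key
  refine hineq.trans (le_of_eq ?_)
  have h1 : (n : ℝ) * lam = m := by rw [hlam]; field_simp [hn0.ne']
  have h2' : (n : ℝ) * (1 - lam) = (n : ℝ) - m := by rw [mul_sub, mul_one, h1]
  have hbe : (n : ℝ) * binEnt lam =
      Real.logb 2 lam * (-(m : ℝ)) + Real.logb 2 mu * (-((n : ℝ) - m)) := by
    rw [binEnt, hmu]
    linear_combination (-(Real.logb 2 lam)) * h1 + (-(Real.logb 2 (1 - lam))) * h2'
  rw [hbe, Real.rpow_add two_pos,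
    Real.rpow_mul (by norm_num : (0:ℝ) ≤ 2) (Real.logb 2 lam),
    Real.rpow_mul (by norm_num : (0:ℝ) ≤ 2) (Real.logb 2 mu),
    Real.rpow_logb two_pos (by norm_num) hl0,
    Real.rpow_logb two_pos (by norm_num) hmu0]
  rw [mul_inv]
  congr 1
  · rw [Real.rpow_neg hl0.le, Real.rpow_natCast]
  · rw [Real.rpow_neg hmu0.le, ← Nat.cast_sub hmn, Real.rpow_natCast]


/-- If k ≤ n/2 - 1, there exists a parity-check matrix of C with at most 2^(n·H((k+1)/n))
rows whose dead-end set enumerator equals the incorrigible set enumerator of C. -/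
theorem stmt_12 {n k : ℕ} (C : Submodule (ZMod 2) (Fin n → ZMod 2))
    (hk : Module.finrank (ZMod 2) C = k)
    (hkn : (k : ℝ) ≤ (n : ℝ) / 2 - 1) :
    ∃ (r : ℕ) (H : Matrix (Fin r) (Fin n) (ZMod 2)), IsPCM C H ∧
      (r : ℝ) ≤ (2 : ℝ) ^ ((n : ℝ) * binEnt ((k + 1 : ℝ) / (n : ℝ))) ∧
      ∀ S : Finset (Fin n),
        ((∃ T ⊆ S, T.Nonempty ∧ IsStoppingSet H T) ↔ ∃ c ∈ C, c ≠ 0 ∧ supp c ⊆ S) := by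
  classical
  set F : Finset (Fin n → ZMod 2) :=
    Finset.univ.filter (fun y => y ∈ dualCode C ∧ wt y ≤ k + 1) with hF
  set row : Fin F.card → (Fin n → ZMod 2) := fun i => (F.equivFin.symm i : Fin n → ZMod 2)
    with hrowdef
  have hrow : ∀ i, row i ∈ dualCode C ∧ wt (row i) ≤ k + 1 := by
    intro i
    have h2 := (Finset.mem_filter.mp (F.equivFin.symm i).2).2
    exact h2
  have hmem : ∀ y, y ∈ dualCode C → wt y ≤ k + 1 → ∃ i, row i = y := by
    intro y hy hw
    have hyF : y ∈ F := by rw [hF]; simp [hy, hw]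
    exact ⟨F.equivFin ⟨y, hyF⟩, by rw [hrowdef]; simp⟩
  refine ⟨F.card, Matrix.of row, ?_, ?_, ?_⟩
  · -- PCM
    intro x
    constructor
    · intro hx i
      exact (hrow i).1 x hx
    · intro hall
      have horth : ∀ y ∈ dualCode C, ∑ j, y j * x j = 0 := by
        apply orth_all_dual_of_orth_low
        intro w hw hwt
        rw [hk] at hwt
        obtain ⟨i, hi⟩ := hmem w hw hwt
        rw [← hi]
        exact hall i
      rw [← dualCode_dualCode C]
      intro y hy
      rw [Finset.sum_congr rfl (fun j _ => mul_comm (x j) (y j))]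
      exact horth y hy
  · -- cardinality bound
    have h1 : F.card ≤ ∑ i ∈ Finset.range (k + 1 + 1), (Fintype.card (Fin n)).choose i := by
      apply card_le_sum_choose
      intro y hy
      rw [hF] at hy
      exact (Finset.mem_filter.mp hy).2.2
    rw [Fintype.card_fin] at h1
    have h2 : ((∑ i ∈ Finset.range (k + 1 + 1), n.choose i : ℕ) : ℝ) ≤
        (2 : ℝ) ^ ((n : ℝ) * binEnt (((k + 1 : ℕ) : ℝ) / (n : ℝ))) := by
      have harg : ((k + 1 : ℕ) : ℝ) ≤ (n : ℝ) / 2 := by push_cast; linarith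
      rw [Nat.cast_sum]
      exact sum_choose_le_rpow n (k + 1) (by omega) harg
    calc (F.card : ℝ) ≤ ((∑ i ∈ Finset.range (k + 1 + 1), n.choose i : ℕ) : ℝ) := by
          exact_mod_cast h1
      _ ≤ (2 : ℝ) ^ ((n : ℝ) * binEnt (((k + 1 : ℕ) : ℝ) / (n : ℝ))) := h2
      _ = (2 : ℝ) ^ ((n : ℝ) * binEnt ((k + 1 : ℝ) / (n : ℝ))) := by push_cast; ring_nf
  · -- enumerator equality
    intro S
    constructor
    · rintro ⟨T, hTS, ⟨t, ht⟩, hTstop⟩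
      by_contra hno
      push_neg at hno
      have hnc : ∀ c ∈ C, c ≠ 0 → ¬ supp c ⊆ T := by
        intro c hc hc0 hsub
        exact hno c hc hc0 (hsub.trans hTS)
      obtain ⟨y, hy, hwt, hyt, hyT⟩ := exists_low_wt_dual_single ht hnc
      rw [hk] at hwt
      obtain ⟨i, hi⟩ := hmem y hy hwt
      apply hTstop i
      have : T.filter (fun j => Matrix.of row i j = 1) = {t} := by
        ext j
        simp only [Finset.mem_filter, Finset.mem_singleton, Matrix.of_apply, hi]
        constructor
        · rintro ⟨hjT, hj1⟩
          by_contra hjt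
          rw [hyT j hjT hjt] at hj1
          exact absurd hj1 (by decide)
        · rintro rfl
          exact ⟨ht, hyt⟩
      rw [this, Finset.card_singleton]
    · rintro ⟨c, hcC, hc0, hcS⟩
      refine ⟨supp c, hcS, supp_nonempty hc0, ?_⟩
      intro i
      exact card_filter_ne_one_of_dual hcC (hrow i).1
end

section
/- If C is a minimum stopping binary linear [n,k,d] code with d ≥ 2 and no zero-coordinates, then C is equivalent (up to coordinate permutation) to a direct sum of repetition codes R_{n₁} ⊕ ... ⊕ R_{n_t} with each n_i ≥ 2 and n₁+...+n_t = n. -/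
open Finset

variable {ι : Type*}

/-- The direct sum (juxtaposition) of binary linear codes. -/
def dirSum {t : ℕ} {m : Fin t → ℕ}
    (C : ∀ i, Submodule (ZMod 2) (Fin (m i) → ZMod 2)) :
    Submodule (ZMod 2) ((Σ i, Fin (m i)) → ZMod 2) where
  carrier := {x | ∀ i, (fun j => x ⟨i, j⟩) ∈ C i}
  add_mem' := fun ha hb i => (C i).add_mem (ha i) (hb i)
  zero_mem' := fun i => (C i).zero_mem
  smul_mem' := fun c _ hx i => (C i).smul_mem c (hx i)

/-- The [m,1,m] binary repetition code. -/
def repCode (m : ℕ) : Submodule (ZMod 2) (Fin m → ZMod 2) where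
  carrier := {x | ∀ j j', x j = x j'}
  add_mem' := fun ha hb j j' => by simp only [Pi.add_apply]; rw [ha j j', hb j j']
  zero_mem' := fun j j' => rfl
  smul_mem' := fun c _ hx j j' => by simp only [Pi.smul_apply]; rw [hx j j']

section AuxLemmas

variable {n : ℕ}

lemma zmod2_cases (a : ZMod 2) : a = 0 ∨ a = 1 := by revert a; decide

lemma zmod2_ne_zero_iff {a : ZMod 2} : a ≠ 0 ↔ a = 1 := by revert a; decide

lemma mem_supp_iff {x : Fin n → ZMod 2} {j : Fin n} : j ∈ supp x ↔ x j ≠ 0 := by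
  simp [supp]

/-- the support of a codeword is a stopping set -/
lemma supp_stopping (C : Submodule (ZMod 2) (Fin n → ZMod 2)) {c : Fin n → ZMod 2}
    (hc : c ∈ C) : IsStoppingSet (Hstar C) (supp c) := by
  rintro ⟨y, hy⟩ h1
  have hsum : ∑ j, y j * c j = 0 := hy c hc
  have hfe : (supp c).filter (fun j => y j = 1)
      = Finset.univ.filter (fun j => y j = 1 ∧ c j = 1) := by
    ext j
    simp [supp, Finset.filter_filter, zmod2_ne_zero_iff, and_comm]
  have hterm : ∀ j, y j * c j = if y j = 1 ∧ c j = 1 then 1 else 0 := by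
    intro j
    rcases zmod2_cases (y j) with h | h <;> rcases zmod2_cases (c j) with h' | h' <;>
      simp [h, h']
  rw [Finset.sum_congr rfl (fun j _ => hterm j), Finset.sum_boole] at hsum
  simp only [Hstar] at h1
  replace h1 : ((supp c).filter (fun j => y j = 1)).card = 1 := h1
  rw [hfe] at h1
  rw [h1] at hsum
  simp at hsum

end AuxLemmas
section AuxLemmas2

variable {n : ℕ}

lemma union_stopping {ρ : Type*} {H : Matrix ρ (Fin n) (ZMod 2)} {S T : Finset (Fin n)}
    (hS : IsStoppingSet H S) (hT : IsStoppingSet H T) : IsStoppingSet H (S ∪ T) := by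
  intro i h1
  rw [Finset.filter_union] at h1
  obtain ⟨a, ha⟩ := Finset.card_eq_one.mp h1
  have hmem : a ∈ S.filter (fun j => H i j = 1) ∪ T.filter (fun j => H i j = 1) := by
    rw [ha]; exact Finset.mem_singleton_self a
  have key : ∀ U : Finset (Fin n), a ∈ U → U ⊆ {a} → U.card = 1 := by
    intro U haU hsub
    have h2 : U.card ≤ 1 := by simpa using Finset.card_le_card hsub
    have h3 : 1 ≤ U.card := Finset.card_pos.mpr ⟨a, haU⟩
    omega
  rcases Finset.mem_union.mp hmem with h | h
  · exact hS i (key _ h (ha ▸ Finset.subset_union_left))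
  · exact hT i (key _ h (ha ▸ Finset.subset_union_right))

variable {C : Submodule (ZMod 2) (Fin n → ZMod 2)}

lemma exists_supp_union (hms : MinStopping C) {c c' : Fin n → ZMod 2}
    (hc : c ∈ C) (hc' : c' ∈ C) : ∃ u ∈ C, supp u = supp c ∪ supp c' :=
  hms _ (union_stopping (supp_stopping C hc) (supp_stopping C hc'))

lemma exists_supp_inter (hms : MinStopping C) {c c' : Fin n → ZMod 2}
    (hc : c ∈ C) (hc' : c' ∈ C) : ∃ u ∈ C, supp u = supp c ∩ supp c' := by
  obtain ⟨w, hw, hws⟩ := exists_supp_union hms hc hc'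
  refine ⟨c + c' + w, C.add_mem (C.add_mem hc hc') hw, ?_⟩
  ext j
  have hwj : w j ≠ 0 ↔ (c j ≠ 0 ∨ c' j ≠ 0) := by
    have := Finset.ext_iff.mp hws j
    simpa [mem_supp_iff, Finset.mem_union] using this
  simp only [mem_supp_iff, Finset.mem_inter, Pi.add_apply]
  rcases zmod2_cases (c j) with h | h <;> rcases zmod2_cases (c' j) with h' | h' <;>
    rcases zmod2_cases (w j) with h'' | h'' <;> simp [h, h', h''] at hwj ⊢ <;> decide

lemma univ_stopping (hnz : ∀ j : Fin n, ∃ c ∈ C, c j ≠ 0) :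
    IsStoppingSet (Hstar C) Finset.univ := by
  rintro ⟨y, hy⟩ h1
  obtain ⟨a, ha⟩ := Finset.card_eq_one.mp h1
  obtain ⟨c, hc, hca⟩ := hnz a
  have hsum : ∑ j, y j * c j = 0 := hy c hc
  have hya : y a = 1 := by
    have : a ∈ Finset.univ.filter (fun j => Hstar C ⟨y, hy⟩ j = 1) := by
      rw [ha]; exact Finset.mem_singleton_self a
    exact (Finset.mem_filter.mp this).2
  have hyz : ∀ j, j ≠ a → y j * c j = 0 := by
    intro j hj
    have : y j ≠ 1 := by
      intro hyj
      have : j ∈ Finset.univ.filter (fun j => Hstar C ⟨y, hy⟩ j = 1) := by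
        exact Finset.mem_filter.mpr ⟨Finset.mem_univ _, hyj⟩
      rw [ha] at this
      exact hj (Finset.mem_singleton.mp this)
    rcases zmod2_cases (y j) with h | h
    · simp [h]
    · exact absurd h this
  rw [Finset.sum_eq_single a (fun j _ hj => hyz j hj) (by simp)] at hsum
  rw [hya, one_mul] at hsum
  exact hca hsum

lemma exists_allones (hms : MinStopping C) (hnz : ∀ j : Fin n, ∃ c ∈ C, c j ≠ 0) :
    ∃ e ∈ C, ∀ j, e j = 1 := by
  obtain ⟨e, he, hes⟩ := hms _ (univ_stopping hnz)
  refine ⟨e, he, fun j => ?_⟩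
  have : j ∈ supp e := hes ▸ Finset.mem_univ j
  exact zmod2_ne_zero_iff.mp (mem_supp_iff.mp this)

lemma exists_supp_inf (hms : MinStopping C) (hnz : ∀ j : Fin n, ∃ c ∈ C, c j ≠ 0)
    (D : Finset (Fin n → ZMod 2)) (hD : ∀ c ∈ D, c ∈ C) :
    ∃ u ∈ C, supp u = D.inf (fun c => supp c) := by
  classical
  induction D using Finset.induction_on with
  | empty =>
      obtain ⟨e, he, he1⟩ := exists_allones hms hnz
      refine ⟨e, he, ?_⟩
      rw [Finset.inf_empty]
      ext j
      simp [mem_supp_iff, he1 j, Finset.top_eq_univ]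
  | insert _ _ hnotmem ih =>
      rename_i a D'
      obtain ⟨u, hu, hus⟩ := ih (fun c hc => hD c (Finset.mem_insert_of_mem hc))
      obtain ⟨v, hv, hvs⟩ := exists_supp_inter hms (hD a (Finset.mem_insert_self a D')) hu
      refine ⟨v, hv, ?_⟩
      rw [Finset.inf_insert, hvs, hus, Finset.inf_eq_inter]

end AuxLemmas2
section AuxLemmas3

variable {n : ℕ} {C : Submodule (ZMod 2) (Fin n → ZMod 2)}

lemma class_indicator (hms : MinStopping C) (hnz : ∀ j : Fin n, ∃ c ∈ C, c j ≠ 0)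
    (j : Fin n) : ∃ u ∈ C, ∀ j', (u j' = 1 ↔ ∀ x ∈ C, x j = x j') := by
  classical
  obtain ⟨e, he, he1⟩ := exists_allones hms hnz
  set F : (Fin n → ZMod 2) → (Fin n → ZMod 2) := fun c => c + (c j + 1) • e with hF
  set D : Finset (Fin n → ZMod 2) := (Finset.univ.filter (· ∈ C)).image F with hD
  have hDC : ∀ c ∈ D, c ∈ C := by
    intro c hc
    obtain ⟨b, hb, rfl⟩ := Finset.mem_image.mp hc
    have hbC : b ∈ C := (Finset.mem_filter.mp hb).2
    exact C.add_mem hbC (C.smul_mem _ he)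
  obtain ⟨u, hu, hus⟩ := exists_supp_inf hms hnz D hDC
  have hFval : ∀ (b : Fin n → ZMod 2) (j' : Fin n), F b j' = b j' + b j + 1 := by
    intro b j'
    simp [hF, he1 j', add_assoc]
  have hFsupp : ∀ (b : Fin n → ZMod 2) (j' : Fin n), j' ∈ supp (F b) ↔ b j = b j' := by
    intro b j'
    rw [mem_supp_iff, hFval]
    rcases zmod2_cases (b j) with h | h <;> rcases zmod2_cases (b j') with h' | h' <;>
      simp [h, h'] <;> decide
  refine ⟨u, hu, fun j' => ?_⟩
  rw [← zmod2_ne_zero_iff, ← mem_supp_iff, hus, Finset.mem_inf]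
  constructor
  · intro h x hx
    have : j' ∈ supp (F x) := h (F x) (Finset.mem_image_of_mem F (Finset.mem_filter.mpr ⟨Finset.mem_univ x, hx⟩))
    exact (hFsupp x j').mp this
  · intro h c hc
    obtain ⟨b, hb, rfl⟩ := Finset.mem_image.mp hc
    exact (hFsupp b j').mpr (h b (Finset.mem_filter.mp hb).2)

lemma respects_mem_aux (hms : MinStopping C) (hnz : ∀ j : Fin n, ∃ c ∈ C, c j ≠ 0) :
    ∀ N (x : Fin n → ZMod 2), wt x ≤ N →
      (∀ j j', (∀ c ∈ C, c j = c j') → x j = x j') → x ∈ C := by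
  intro N
  induction N with
  | zero =>
      intro x hw _
      have hs : supp x = ∅ := Finset.card_eq_zero.mp (Nat.le_zero.mp hw)
      have hx : x = 0 := by
        funext j'
        have : j' ∉ supp x := hs ▸ Finset.notMem_empty j'
        simpa [mem_supp_iff, not_not] using this
      exact hx ▸ C.zero_mem
  | succ N ih =>
      intro x hw hresp
      by_cases hx0 : x = 0
      · exact hx0 ▸ C.zero_mem
      · obtain ⟨j, hj⟩ := Function.ne_iff.mp hx0
        have hj : x j ≠ 0 := by simpa using hj
        have hxj1 : x j = 1 := zmod2_ne_zero_iff.mp hj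
        obtain ⟨u, hu, huP⟩ := class_indicator hms hnz j
        have huj : u j = 1 := (huP j).mpr (fun x _ => rfl)
        have hux : ∀ j', u j' = 1 → x j' = 1 := by
          intro j' h
          rw [← hresp j j' ((huP j').mp h)]; exact hxj1
        have hsub : supp (x + u) ⊆ supp x := by
          intro j' hj'
          rw [mem_supp_iff] at hj' ⊢
          rcases zmod2_cases (u j') with h | h
          · simpa [h] using hj'
          · rw [hux j' h]; exact one_ne_zero
        have hss : supp (x + u) ⊂ supp x := by
          refine Finset.ssubset_iff_of_subset hsub |>.mpr ⟨j, mem_supp_iff.mpr hj, ?_⟩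
          rw [mem_supp_iff, not_not, Pi.add_apply, hxj1, huj]
          decide
        have hw' : wt (x + u) ≤ N := by
          have := Finset.card_lt_card hss
          unfold wt at hw ⊢
          omega
        have hresp' : ∀ j₁ j₂, (∀ c ∈ C, c j₁ = c j₂) → (x + u) j₁ = (x + u) j₂ := by
          intro j₁ j₂ h12
          simp only [Pi.add_apply]
          rw [hresp j₁ j₂ h12, h12 u hu]
        have hx' : x + u ∈ C := ih (x + u) hw' hresp'
        have hxx : x = (x + u) + u := by
          funext j'
          have : ∀ a b : ZMod 2, a + b + b = a := by decide
          simpa using (this (x j') (u j')).symm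
        rw [hxx]
        exact C.add_mem hx' hu

lemma respects_mem (hms : MinStopping C) (hnz : ∀ j : Fin n, ∃ c ∈ C, c j ≠ 0)
    (x : Fin n → ZMod 2) (hresp : ∀ j j', (∀ c ∈ C, c j = c j') → x j = x j') : x ∈ C :=
  respects_mem_aux hms hnz (wt x) x le_rfl hresp

end AuxLemmas3
lemma mem_dirSum_rep {t : ℕ} {m : Fin t → ℕ} (x : (Σ i, Fin (m i)) → ZMod 2) :
    x ∈ dirSum (fun i => repCode (m i)) ↔ ∀ i (jj jj' : Fin (m i)), x ⟨i, jj⟩ = x ⟨i, jj'⟩ :=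
  Iff.rfl

/-- A minimum stopping binary linear [n,k,d] code with d ≥ 2 and no zero-coordinates is
equivalent, up to a coordinate permutation, to a direct sum of repetition codes
R_{n₁} ⊕ ... ⊕ R_{n_t} with all n_i ≥ 2 and n₁ + ... + n_t = n. -/
theorem stmt_18 {n k : ℕ} (C : Submodule (ZMod 2) (Fin n → ZMod 2))
    (hk : Module.finrank (ZMod 2) C = k) (hk1 : 1 ≤ k)
    (hd : ∀ c ∈ C, c ≠ 0 → 2 ≤ wt c)
    (hnz : ∀ j : Fin n, ∃ c ∈ C, c j ≠ 0)
    (hms : MinStopping C) :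
    ∃ (t : ℕ) (m : Fin t → ℕ), 1 ≤ t ∧ (∀ i, 2 ≤ m i) ∧ (∑ i, m i) = n ∧
      ∃ σ : Fin n ≃ (Σ i, Fin (m i)),
        ∀ x : Fin n → ZMod 2,
          x ∈ C ↔ (fun p => x (σ.symm p)) ∈ dirSum (fun i => repCode (m i)) := by
  classical
  -- n is positive
  have hn : 1 ≤ n := by
    have h1 := Submodule.finrank_le C
    rw [hk, Module.finrank_pi (ZMod 2)] at h1
    simpa using hk1.trans h1
  -- the setoid of coordinate equivalence
  letI s : Setoid (Fin n) :=
    ⟨fun j j' => ∀ x ∈ C, x j = x j',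
      ⟨fun _ _ _ => rfl, fun h x hx => (h x hx).symm,
        fun h1 h2 x hx => (h1 x hx).trans (h2 x hx)⟩⟩
  set t := Fintype.card (Quotient s) with ht
  set e : Quotient s ≃ Fin t := Fintype.equivFin (Quotient s) with he
  set f : Fin n → Fin t := fun j => e ⟦j⟧ with hf
  set m : Fin t → ℕ := fun i => Fintype.card {j // f j = i} with hm
  refine ⟨t, m, ?_, ?_, ?_, ?_⟩
  · -- 1 ≤ t
    have : Nonempty (Quotient s) := ⟨⟦⟨0, hn⟩⟧⟩
    exact Fintype.card_pos
  · -- 2 ≤ m i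
    intro i
    obtain ⟨j₀, hj₀⟩ := Quotient.exists_rep (e.symm i)
    obtain ⟨u, hu, huP⟩ := class_indicator hms hnz j₀
    have huj₀ : u j₀ = 1 := (huP j₀).mpr (fun _ _ => rfl)
    have hune : u ≠ 0 := by
      intro h
      rw [h, Pi.zero_apply] at huj₀
      exact absurd huj₀ (by decide)
    have h2 : 2 ≤ wt u := hd u hu hune
    have hsf : supp u = Finset.univ.filter (fun j => f j = i) := by
      ext j
      rw [mem_supp_iff, zmod2_ne_zero_iff, huP j, Finset.mem_filter]
      simp only [Finset.mem_univ, true_and, hf]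
      have hij₀ : e ⟦j₀⟧ = i := by rw [hj₀, Equiv.apply_symm_apply]
      constructor
      · intro h
        rw [show (⟦j⟧ : Quotient s) = ⟦j₀⟧ from Quotient.sound (fun x hx => (h x hx).symm),
          hij₀]
      · intro h
        have hq : (⟦j⟧ : Quotient s) = ⟦j₀⟧ := e.injective (by rw [h, hij₀])
        exact fun x hx => (Quotient.exact hq x hx).symm
    have : m i = (Finset.univ.filter (fun j => f j = i)).card := by
      rw [hm]
      exact Fintype.card_subtype _
    rw [this, ← hsf]
    exact h2
  · -- sum of m = n
    have h1 : Fintype.card (Σ i, {j // f j = i}) = n := by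
      rw [Fintype.card_congr (Equiv.sigmaFiberEquiv f)]
      simp
    rw [Fintype.card_sigma] at h1
    exact h1
  · -- the equivalence
    refine ⟨(Equiv.sigmaFiberEquiv f).symm.trans
      (Equiv.sigmaCongrRight fun i => Fintype.equivFin {j // f j = i}), fun x => ?_⟩
    set σ : Fin n ≃ Σ i, Fin (m i) := (Equiv.sigmaFiberEquiv f).symm.trans
      (Equiv.sigmaCongrRight fun i => Fintype.equivFin {j // f j = i}) with hσ
    have hσ1 : ∀ j, (σ j).1 = f j := fun j => rfl
    have hσ2 : ∀ p : Σ i, Fin (m i), f (σ.symm p) = p.1 := by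
      intro p
      rw [← hσ1 (σ.symm p), Equiv.apply_symm_apply]
    rw [mem_dirSum_rep]
    constructor
    · intro hx i jj jj'
      have hff : f (σ.symm ⟨i, jj⟩) = f (σ.symm ⟨i, jj'⟩) := by rw [hσ2, hσ2]
      have hq : (⟦σ.symm ⟨i, jj⟩⟧ : Quotient s) = ⟦σ.symm ⟨i, jj'⟩⟧ := e.injective hff
      exact Quotient.exact hq x hx
    · intro h
      apply respects_mem hms hnz
      intro j j' hjj
      have hff : f j = f j' := by
        rw [hf]
        exact congrArg e (Quotient.sound hjj)
      have key : ∀ p q : Σ i, Fin (m i), p.1 = q.1 → x (σ.symm p) = x (σ.symm q) := by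
        rintro ⟨i, jj⟩ ⟨i', jj'⟩ hpq
        simp only at hpq
        subst hpq
        exact h i jj jj'
      have := key (σ j) (σ j') (by rw [hσ1, hσ1, hff])
      rwa [Equiv.symm_apply_apply, Equiv.symm_apply_apply] at this
end
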